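/- arXiv:2503.13849 — 2 statements merged into one kernel-verified Lean document; each statement's English description precedes it below -/
import Mathlib

section
/- Let f : ℝⁿ → ℝⁿ be a super-linearizable polynomial vector field and let ψ : ℝⁿ → ℝⁿ be a stably tame polynomial automorphism with polynomial inverse ψ⁻¹. Then the transformed polynomial vector field h(y) = Dψ(ψ⁻¹(y)) · f(ψ⁻¹(y)) is super-linearizable. -/
open Matrix MvPolynomial

/-- A map between finite-dimensional real coordinate spaces is polynomial if each
component is given by a real multivariate polynomial. -/
def IsPolyMap {n m : ℕ} (f : (Fin n → ℝ) → (Fin m → ℝ)) : Prop :=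
  ∃ P : Fin m → MvPolynomial (Fin n) ℝ, ∀ x i, f x i = MvPolynomial.eval x (P i)

/-- A vector field `f : ℝⁿ → ℝⁿ` is super-linearizable if there are `k ∈ ℕ`, a matrix
`A ∈ ℝ^{(n+k)×(n+k)}` and a polynomial map `p : ℝⁿ → ℝᵏ` such that every solution of
`ẋ = f(x)` starting at `x₀` is, for `t ≥ 0`, the projection on the first `n` coordinates
of `t ↦ exp(tA)·(x₀, p(x₀))`. -/
def IsSuperLinearizable {n : ℕ} (f : (Fin n → ℝ) → (Fin n → ℝ)) : Prop :=
  ∃ (k : ℕ) (A : Matrix (Fin (n + k)) (Fin (n + k)) ℝ)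
    (p : (Fin n → ℝ) → (Fin k → ℝ)), IsPolyMap p ∧
    ∀ (x₀ : Fin n → ℝ) (x : ℝ → (Fin n → ℝ)),
      x 0 = x₀ →
      (∀ t : ℝ, 0 ≤ t → HasDerivAt x (f (x t)) t) →
      ∀ t : ℝ, 0 ≤ t → ∀ i : Fin n,
        (NormedSpace.exp (t • A)).mulVec (Fin.append x₀ (p x₀)) (Fin.castAdd k i) = x t i

/-- An elementary transformation of `ℝⁿ`: it adds to the last coordinate a polynomial `g`
of degree greater than `1` depending only on the first `n-1` coordinates. -/
def IsElementaryMap {n : ℕ} (φ : (Fin n → ℝ) → (Fin n → ℝ)) : Prop :=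
  ∃ g : MvPolynomial (Fin n) ℝ, 1 < g.totalDegree ∧
    (∀ i : Fin n, (i : ℕ) + 1 = n → i ∉ g.vars) ∧
    ∀ x j, φ x j = if (j : ℕ) + 1 = n then x j + MvPolynomial.eval x g else x j

/-- An affine automorphism of `ℝⁿ`: `x ↦ Ax + b` with `A` invertible. -/
def IsAffineAut {n : ℕ} (φ : (Fin n → ℝ) → (Fin n → ℝ)) : Prop :=
  ∃ (A : Matrix (Fin n) (Fin n) ℝ) (b : Fin n → ℝ), IsUnit A.det ∧
    ∀ x, φ x = A.mulVec x + b

/-- A tame automorphism: a finite composition of affine and elementary transformations. -/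
def IsTame {n : ℕ} (φ : (Fin n → ℝ) → (Fin n → ℝ)) : Prop :=
  ∃ L : List ((Fin n → ℝ) → (Fin n → ℝ)),
    (∀ ψ ∈ L, IsAffineAut ψ ∨ IsElementaryMap ψ) ∧ φ = L.foldr (· ∘ ·) id

/-- A polynomial automorphism `ψ : ℝⁿ → ℝⁿ` is stably tame if it becomes tame after
adjoining finitely many stabilizing variables given by a polynomial map. -/
def IsStablyTame {n : ℕ} (ψ : (Fin n → ℝ) → (Fin n → ℝ)) : Prop :=
  ∃ m : ℕ, 0 < m ∧
    ∃ (φ : (Fin (n + m) → ℝ) → (Fin (n + m) → ℝ)) (y : (Fin n → ℝ) → (Fin m → ℝ)),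
      IsTame φ ∧ IsPolyMap y ∧
      ∀ (x : Fin n → ℝ) (i : Fin n), φ (Fin.append x (y x)) (Fin.castAdd m i) = ψ x i

section AuxLemmas

private lemma differentiable_eval_poly {n : ℕ} (P : MvPolynomial (Fin n) ℝ) :
    Differentiable ℝ fun x : Fin n → ℝ => MvPolynomial.eval x P := by
  induction P using MvPolynomial.induction_on with
  | C a => simp
  | add p q hp hq => simpa using hp.fun_add hq
  | mul_X p i hp =>
      simpa using hp.fun_mul ((ContinuousLinearMap.proj i : (Fin n → ℝ) →L[ℝ] ℝ).differentiable)

private lemma IsPolyMap.differentiable {n m : ℕ} {g : (Fin n → ℝ) → (Fin m → ℝ)}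
    (hg : IsPolyMap g) : Differentiable ℝ g := by
  obtain ⟨P, hP⟩ := hg
  have hfun : g = fun x i => MvPolynomial.eval x (P i) :=
    funext fun x => funext fun i => hP x i
  rw [hfun]
  exact differentiable_pi.mpr fun i => differentiable_eval_poly (P i)

private lemma hasDerivAt_eval_curve {N : ℕ} (w : ℝ → Fin N → ℝ) (w' : Fin N → ℝ) (t : ℝ)
    (hw : ∀ j, HasDerivAt (fun s => w s j) (w' j) t) (P : MvPolynomial (Fin N) ℝ) :
    HasDerivAt (fun s => MvPolynomial.eval (w s) P)
      (∑ j, MvPolynomial.eval (w t) (MvPolynomial.pderiv j P) * w' j) t := by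
  induction P using MvPolynomial.induction_on with
  | C a => simpa [pderiv_C] using hasDerivAt_const t (a : ℝ)
  | add p q hp hq =>
      simpa [map_add, add_mul, Finset.sum_add_distrib] using hp.fun_add hq
  | mul_X p i hp =>
      have H := hp.fun_mul (hw i)
      have hfun : (fun s => eval (w s) (p * X i)) = fun s => eval (w s) p * w s i := by
        funext s; rw [_root_.map_mul, eval_X]
      rw [hfun]
      refine H.congr_deriv (Eq.symm ?_)
      rw [Finset.sum_congr rfl (fun j (_ : j ∈ Finset.univ) => by
        rw [pderiv_mul, map_add, _root_.map_mul, _root_.map_mul, eval_X, pderiv_X])]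
      simp only [add_mul, Finset.sum_add_distrib]
      congr 1
      · rw [Finset.sum_mul]; exact Finset.sum_congr rfl fun j _ => by ring
      · rw [Finset.sum_eq_single i]
        · simp
        · intro j _ hj
          rw [Pi.single_eq_of_ne (Ne.symm hj)]
          simp
        · simp

private lemma hasDerivAt_exp_entry {ι : Type*} [Fintype ι] [DecidableEq ι]
    (M : Matrix ι ι ℝ) (t : ℝ) (i j : ι) :
    HasDerivAt (fun s : ℝ => NormedSpace.exp (s • M) i j)
      ((M * NormedSpace.exp (t • M)) i j) t := by
  letI : SeminormedRing (Matrix ι ι ℝ) := Matrix.linftyOpSemiNormedRing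
  letI : NormedRing (Matrix ι ι ℝ) := Matrix.linftyOpNormedRing
  letI : NormedAlgebra ℝ (Matrix ι ι ℝ) := Matrix.linftyOpNormedAlgebra
  letI : CompleteSpace (Matrix ι ι ℝ) := FiniteDimensional.complete ℝ _
  have H := hasDerivAt_exp_smul_const' (𝕂 := ℝ) M t
  let L : Matrix ι ι ℝ →ₗ[ℝ] ℝ :=
    { toFun := fun B => B i j
      map_add' := fun B C => rfl
      map_smul' := fun c B => rfl }
  exact (LinearMap.toContinuousLinearMap L).hasFDerivAt.comp_hasDerivAt t H

private lemma flow_eq_exp_mulVec {ι : Type*} [Fintype ι] [DecidableEq ι]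
    (M : Matrix ι ι ℝ) (Z : ℝ → ι → ℝ)
    (hZ : ∀ t j, HasDerivAt (fun s => Z s j) (M.mulVec (Z t) j) t) :
    ∀ t j, (NormedSpace.exp (t • M)).mulVec (Z 0) j = Z t j := by
  have key : ∀ t j, (NormedSpace.exp (t • (-M))).mulVec (Z t) j = Z 0 j := by
    intro t j
    set g : ℝ → ℝ := fun s => (NormedSpace.exp (s • (-M))).mulVec (Z s) j with hg
    have hgderiv : ∀ s, HasDerivAt g 0 s := by
      intro s
      have hterm : ∀ l, HasDerivAt
          (fun u : ℝ => NormedSpace.exp (u • (-M)) j l * Z u l)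
          (((-M) * NormedSpace.exp (s • (-M))) j l * Z s l
            + NormedSpace.exp (s • (-M)) j l * M.mulVec (Z s) l) s :=
        fun l => (hasDerivAt_exp_entry (-M) s j l).mul (hZ s l)
      have hsum := HasDerivAt.fun_sum (fun l (_ : l ∈ Finset.univ) => hterm l)
      have hgfun : g = fun u => ∑ l, NormedSpace.exp (u • (-M)) j l * Z u l := by
        funext u; simp [g, Matrix.mulVec, dotProduct]
      rw [hgfun]
      refine hsum.congr_deriv (Eq.symm ?_)
      have hcomm : (-M) * NormedSpace.exp (s • (-M))
          = -(NormedSpace.exp (s • (-M)) * M) := by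
        have h1 : Commute (s • (-M)) M := by
          simpa using (Commute.refl M).neg_left.smul_left s
        have h2 := h1.exp_left
        rw [neg_mul, h2.eq]
      rw [eq_comm, Finset.sum_add_distrib]
      have e1 : ∑ l, ((-M) * NormedSpace.exp (s • (-M))) j l * Z s l
          = (((-M) * NormedSpace.exp (s • (-M))).mulVec (Z s)) j := rfl
      have e2 : ∑ l, NormedSpace.exp (s • (-M)) j l * M.mulVec (Z s) l
          = ((NormedSpace.exp (s • (-M)) * M).mulVec (Z s)) j := by
        rw [← Matrix.mulVec_mulVec]; rfl
      rw [e1, e2, hcomm, Matrix.neg_mulVec, Pi.neg_apply, neg_add_cancel]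
    have hconst : g t = g 0 :=
      is_const_of_deriv_eq_zero (fun s => (hgderiv s).differentiableAt)
        (fun s => (hgderiv s).deriv) t 0
    have h0 : g 0 = Z 0 j := by
      simp [g, NormedSpace.exp_zero, Matrix.one_mulVec]
    rw [← h0, ← hconst]
  intro t j
  have hZ0 : Z 0 = (NormedSpace.exp (t • (-M))).mulVec (Z t) := by
    funext l; exact (key t l).symm
  rw [hZ0, Matrix.mulVec_mulVec]
  have hcomm : Commute (t • M) (t • (-M)) := by
    simpa using ((Commute.refl M).neg_right.smul_left t).smul_right t
  rw [← Matrix.exp_add_of_commute _ _ hcomm]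
  have hzero : t • M + t • (-M) = 0 := by simp
  rw [hzero, NormedSpace.exp_zero, Matrix.one_mulVec]

private lemma eval_aeval' {σ τ : Type*} (x : τ → ℝ) (g : σ → MvPolynomial τ ℝ)
    (q : MvPolynomial σ ℝ) :
    MvPolynomial.eval x (MvPolynomial.aeval g q)
      = MvPolynomial.eval (fun j => MvPolynomial.eval x (g j)) q := by
  rw [aeval_def, eval₂_comp_left (eval x)]
  have h1 : (MvPolynomial.eval x).comp (algebraMap ℝ (MvPolynomial τ ℝ)) = RingHom.id ℝ := by
    ext a; simp [MvPolynomial.algebraMap_eq]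
  rw [h1]
  rfl

private lemma totalDegree_linMul_pderiv_le {N : ℕ} (a : Fin N → ℝ) (j : Fin N)
    (P : MvPolynomial (Fin N) ℝ) :
    ((∑ i, MvPolynomial.C (a i) * MvPolynomial.X i) * MvPolynomial.pderiv j P).totalDegree
      ≤ P.totalDegree := by
  have hL : (∑ i, MvPolynomial.C (a i) * MvPolynomial.X i :
      MvPolynomial (Fin N) ℝ).totalDegree ≤ 1 :=
    totalDegree_finsetSum_le fun i _ =>
      (totalDegree_mul _ _).trans (by simp [totalDegree_X])
  conv_lhs => rw [← support_sum_monomial_coeff P]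
  rw [map_sum, Finset.mul_sum]
  refine totalDegree_finsetSum_le fun m hm => ?_
  rw [pderiv_monomial]
  by_cases hmj : m j = 0
  · simp [hmj]
  · refine (totalDegree_mul _ _).trans ?_
    have hmon : ((monomial (m - Finsupp.single j 1)) (coeff m P * (m j : ℝ))).totalDegree
        ≤ (m - Finsupp.single j 1).sum fun _ e => e := by
      refine (totalDegree_monomial_le _ _).trans (le_of_eq ?_)
      rfl
    have hsum : ((m - Finsupp.single j 1).sum fun _ e => e) + 1 = m.sum fun _ e => e := by
      rw [Finsupp.sum_fintype _ _ (fun _ => rfl), Finsupp.sum_fintype _ _ (fun _ => rfl)]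
      rw [Finset.sum_congr rfl fun i (_ : i ∈ Finset.univ) =>
        Finsupp.tsub_apply m (Finsupp.single j 1) i]
      rw [← Finset.add_sum_erase _ _ (Finset.mem_univ j),
        ← Finset.add_sum_erase _ (fun i => m i) (Finset.mem_univ j)]
      have h2 : ∑ i ∈ Finset.univ.erase j, (m i - Finsupp.single j 1 i)
          = ∑ i ∈ Finset.univ.erase j, m i :=
        Finset.sum_congr rfl fun i hi => by
          rw [Finsupp.single_apply, if_neg (Finset.ne_of_mem_erase hi).symm]; omega
      rw [h2, Finsupp.single_apply, if_pos rfl]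
      omega
    have hle : (m.sum fun _ e => e) ≤ P.totalDegree := le_totalDegree hm
    omega

private noncomputable def toF {N D : ℕ} (β : Fin N → Fin (D+1)) : Fin N →₀ ℕ :=
  Finsupp.equivFunOnFinite.symm (fun j => (β j : ℕ))

private lemma toF_injective {N D : ℕ} : Function.Injective (toF (N := N) (D := D)) := by
  intro a b hab
  funext j
  have hj := congrArg (fun m => (m : (Fin N →₀ ℕ)) j) hab
  simp only [toF, Finsupp.equivFunOnFinite_symm_apply_apply] at hj
  exact Fin.val_injective hj

private lemma toF_sum {N D : ℕ} (β : Fin N → Fin (D+1)) :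
    ((toF β).sum fun _ e => e) = ∑ j, (β j : ℕ) := by
  rw [Finsupp.sum_fintype _ _ (fun _ => rfl)]
  rfl

private lemma eval_expand {N D : ℕ} (P : MvPolynomial (Fin N) ℝ) (hP : P.totalDegree ≤ D)
    (v : Fin N → ℝ) :
    MvPolynomial.eval v P = ∑ β : Fin N → Fin (D+1),
      (if (∑ j, (β j : ℕ)) ≤ D then MvPolynomial.coeff (toF β) P else 0)
        * MvPolynomial.eval v (MvPolynomial.monomial (toF β) (1:ℝ)) := by
  classical
  have step1 : ∑ β : Fin N → Fin (D+1),
      (if (∑ j, (β j : ℕ)) ≤ D then MvPolynomial.coeff (toF β) P else 0)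
        * MvPolynomial.eval v (MvPolynomial.monomial (toF β) (1:ℝ))
      = ∑ β ∈ Finset.univ.filter (fun β : Fin N → Fin (D+1) => (∑ j, (β j : ℕ)) ≤ D),
          MvPolynomial.coeff (toF β) P * MvPolynomial.eval v (MvPolynomial.monomial (toF β) (1:ℝ)) := by
    rw [Finset.sum_filter]
    exact Finset.sum_congr rfl fun β _ => by split <;> simp
  rw [step1, ← Finset.sum_image (g := toF) (f := fun m => MvPolynomial.coeff m P
      * MvPolynomial.eval v (MvPolynomial.monomial m (1:ℝ)))
      (fun a _ b _ hab => toF_injective hab)]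
  have hsub : P.support ⊆ (Finset.univ.filter
      (fun β : Fin N → Fin (D+1) => (∑ j, (β j : ℕ)) ≤ D)).image toF := by
    intro m hm
    have hdeg : (m.sum fun _ e => e) ≤ D := le_trans (le_totalDegree hm) hP
    have hsum : (m.sum fun _ e => e) = ∑ j, m j := by
      rw [Finsupp.sum_fintype _ _ (fun _ => rfl)]
    have hcoord : ∀ j, m j ≤ D := by
      intro j
      refine le_trans ?_ hdeg
      rw [hsum]
      exact Finset.single_le_sum (fun i _ => Nat.zero_le _) (Finset.mem_univ j)
    refine Finset.mem_image.mpr ⟨fun j => ⟨m j, Nat.lt_succ_of_le (hcoord j)⟩, ?_, ?_⟩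
    · refine Finset.mem_filter.mpr ⟨Finset.mem_univ _, ?_⟩
      show (∑ j, m j) ≤ D
      rw [← hsum]; exact hdeg
    · show Finsupp.equivFunOnFinite.symm _ = m
      have hfun : (fun j => ((⟨m j, Nat.lt_succ_of_le (hcoord j)⟩ : Fin (D+1)) : ℕ)) = ⇑m := rfl
      rw [hfun, Finsupp.equivFunOnFinite_symm_coe]
  rw [← Finset.sum_subset hsub (fun m _ hm => by
    rw [MvPolynomial.notMem_support_iff.mp hm, zero_mul])]
  conv_lhs => rw [← support_sum_monomial_coeff P]
  rw [map_sum]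
  exact Finset.sum_congr rfl fun m _ => by rw [eval_monomial, eval_monomial, one_mul]

end AuxLemmas

private theorem superlinearizable_aux {n : ℕ}
    (f ψ ψinv h : (Fin n → ℝ) → (Fin n → ℝ))
    (hfpoly : IsPolyMap f) (hfsl : IsSuperLinearizable f)
    (hψpoly : IsPolyMap ψ) (hψinvpoly : IsPolyMap ψinv)
    (hinv : Function.LeftInverse ψinv ψ) (hinv' : Function.RightInverse ψinv ψ)
    (hh : ∀ y, h y = fderiv ℝ ψ (ψinv y) (f (ψinv y))) :
    IsSuperLinearizable h := by
  classical
  obtain ⟨k, A, p, ⟨Pp, hPp⟩, hsol⟩ := hfsl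
  obtain ⟨Ψ, hΨ⟩ := hψpoly
  obtain ⟨Ψinv, hΨinv⟩ := hψinvpoly
  -- polynomial data in the extended variables
  set Q : Fin n → MvPolynomial (Fin (n+k)) ℝ :=
    fun i => rename (Fin.castAdd k) (Ψ i) with hQ
  set D : ℕ := Finset.univ.sup (fun i => (Q i).totalDegree) with hD
  set Dop : MvPolynomial (Fin (n+k)) ℝ → MvPolynomial (Fin (n+k)) ℝ :=
    fun P => ∑ j, (∑ i, MvPolynomial.C (A j i) * MvPolynomial.X i)
      * MvPolynomial.pderiv j P with hDop
  set eP : (Fin (n+k) → Fin (D+1)) → MvPolynomial (Fin (n+k)) ℝ :=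
    fun β => if (∑ j, (β j : ℕ)) ≤ D then MvPolynomial.monomial (toF β) (1:ℝ) else 0 with heP
  set RP : (Fin n ⊕ (Fin (n+k) → Fin (D+1))) → MvPolynomial (Fin (n+k)) ℝ :=
    Sum.elim Q eP with hRP
  set M : Matrix (Fin n ⊕ (Fin (n+k) → Fin (D+1))) (Fin n ⊕ (Fin (n+k) → Fin (D+1))) ℝ :=
    fun r c => Sum.elim (fun _ : Fin n => (0:ℝ))
      (fun β => if (∑ j, (β j : ℕ)) ≤ D then MvPolynomial.coeff (toF β) (Dop (RP r)) else 0) c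
    with hM
  set K : ℕ := Fintype.card (Fin (n+k) → Fin (D+1)) with hK
  set E : (Fin n ⊕ (Fin (n+k) → Fin (D+1))) ≃ Fin (n + K) :=
    (Equiv.sumCongr (Equiv.refl (Fin n)) (Fintype.equivFin _)).trans finSumFinEquiv with hE
  set A' : Matrix (Fin (n+K)) (Fin (n+K)) ℝ :=
    fun r c => M (E.symm r) (E.symm c) with hA'
  set p' : (Fin n → ℝ) → (Fin K → ℝ) := fun y₀ j =>
    MvPolynomial.eval (Fin.append (ψinv y₀) (p (ψinv y₀)))
      (eP ((Fintype.equivFin (Fin (n+k) → Fin (D+1))).symm j)) with hp'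
  -- definitional unfoldings
  have hDopP : ∀ P : MvPolynomial (Fin (n+k)) ℝ,
      Dop P = ∑ j, (∑ i, MvPolynomial.C (A j i) * MvPolynomial.X i)
        * MvPolynomial.pderiv j P := fun _ => rfl
  have hePval : ∀ β, eP β
      = if (∑ j, (β j : ℕ)) ≤ D then MvPolynomial.monomial (toF β) (1:ℝ) else 0 :=
    fun _ => rfl
  have hRPinl : ∀ i, RP (Sum.inl i) = Q i := fun _ => rfl
  have hRPinr : ∀ β, RP (Sum.inr β) = eP β := fun _ => rfl
  have hMinl : ∀ r j, M r (Sum.inl j) = 0 := fun _ _ => rfl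
  have hMinr : ∀ r β, M r (Sum.inr β)
      = if (∑ j, (β j : ℕ)) ≤ D then MvPolynomial.coeff (toF β) (Dop (RP r)) else 0 :=
    fun _ _ => rfl
  -- degree bounds
  have hdegQ : ∀ i, (Q i).totalDegree ≤ D := by
    intro i
    rw [hD]
    exact Finset.le_sup (f := fun i => (Q i).totalDegree) (Finset.mem_univ i)
  have hdegeP : ∀ β, (eP β).totalDegree ≤ D := by
    intro β
    by_cases hβ : (∑ j, (β j : ℕ)) ≤ D
    · have he : eP β = MvPolynomial.monomial (toF β) (1:ℝ) := if_pos hβ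
      rw [he, totalDegree_monomial _ one_ne_zero, toF_sum]
      exact hβ
    · have he : eP β = 0 := if_neg hβ
      rw [he, totalDegree_zero]
      exact Nat.zero_le _
  have hdegR : ∀ r, (RP r).totalDegree ≤ D := by
    intro r
    rcases r with i | β
    · exact hdegQ i
    · exact hdegeP β
  have hdegDop : ∀ P : MvPolynomial (Fin (n+k)) ℝ,
      P.totalDegree ≤ D → (Dop P).totalDegree ≤ D := by
    intro P hPd
    rw [hDopP]
    exact totalDegree_finsetSum_le fun j _ =>
      (totalDegree_linMul_pderiv_le (A j) j P).trans hPd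
  -- p' is a polynomial map
  set G : Fin (n+k) → MvPolynomial (Fin n) ℝ :=
    Fin.addCases (fun i => Ψinv i) (fun j => MvPolynomial.aeval Ψinv (Pp j)) with hG
  have hGeval : ∀ (y₀ : Fin n → ℝ) (l : Fin (n+k)),
      Fin.append (ψinv y₀) (p (ψinv y₀)) l = MvPolynomial.eval y₀ (G l) := by
    intro y₀ l
    refine Fin.addCases (motive := fun l =>
      Fin.append (ψinv y₀) (p (ψinv y₀)) l = MvPolynomial.eval y₀ (G l)) ?_ ?_ l
    · intro i
      rw [Fin.append_left]
      simp only [hG]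
      rw [Fin.addCases_left]
      exact hΨinv y₀ i
    · intro j
      rw [Fin.append_right]
      simp only [hG]
      rw [Fin.addCases_right, eval_aeval']
      rw [hPp (ψinv y₀) j]
      have hψi : ψinv y₀ = fun i => MvPolynomial.eval y₀ (Ψinv i) :=
        funext fun i => hΨinv y₀ i
      rw [← hψi]
  have hp'poly : IsPolyMap p' := by
    refine ⟨fun j => MvPolynomial.aeval G
      (eP ((Fintype.equivFin (Fin (n+k) → Fin (D+1))).symm j)), ?_⟩
    intro y₀ j
    show MvPolynomial.eval (Fin.append (ψinv y₀) (p (ψinv y₀)))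
      (eP ((Fintype.equivFin (Fin (n+k) → Fin (D+1))).symm j)) = _
    have hargs : Fin.append (ψinv y₀) (p (ψinv y₀))
        = fun l => MvPolynomial.eval y₀ (G l) := funext fun l => hGeval y₀ l
    rw [eval_aeval', ← hargs]
  refine ⟨K, A', p', hp'poly, ?_⟩
  intro y₀ y hy0 hyD
  -- the pulled-back trajectory
  set x : ℝ → Fin n → ℝ := fun s => ψinv (y s) with hx
  have hψdiff : Differentiable ℝ ψ := IsPolyMap.differentiable ⟨Ψ, hΨ⟩
  have hψinvdiff : Differentiable ℝ ψinv := IsPolyMap.differentiable ⟨Ψinv, hΨinv⟩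
  have hid : ∀ (a : Fin n → ℝ) (v : Fin n → ℝ),
      fderiv ℝ ψinv (ψ a) (fderiv ℝ ψ a v) = v := by
    intro a v
    have hcomp : fderiv ℝ (ψinv ∘ ψ) a = (fderiv ℝ ψinv (ψ a)).comp (fderiv ℝ ψ a) :=
      fderiv_comp a (hψinvdiff _) (hψdiff _)
    have hidf : ψinv ∘ ψ = id := funext hinv
    rw [hidf, fderiv_id] at hcomp
    have h2 := congrArg (fun L : (Fin n → ℝ) →L[ℝ] (Fin n → ℝ) => L v) hcomp.symm
    simpa using h2
  have hxD : ∀ s, 0 ≤ s → HasDerivAt x (f (x s)) s := by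
    intro s hs
    have hc : HasDerivAt x (fderiv ℝ ψinv (y s) (h (y s))) s :=
      (hψinvdiff (y s)).hasFDerivAt.comp_hasDerivAt s (hyD s hs)
    have hval : fderiv ℝ ψinv (y s) (h (y s)) = f (x s) := by
      rw [hh (y s)]
      have h1 : ψ (ψinv (y s)) = y s := hinv' (y s)
      calc fderiv ℝ ψinv (y s) (fderiv ℝ ψ (ψinv (y s)) (f (ψinv (y s))))
          = fderiv ℝ ψinv (ψ (ψinv (y s))) (fderiv ℝ ψ (ψinv (y s)) (f (ψinv (y s)))) := by
            rw [h1]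
        _ = f (x s) := hid _ _
    rwa [hval] at hc
  have hx0 : x 0 = ψinv y₀ := congrArg ψinv hy0
  have hxlin := hsol (ψinv y₀) x hx0 hxD
  -- the extended linear flow
  set w0 : Fin (n+k) → ℝ := Fin.append (ψinv y₀) (p (ψinv y₀)) with hw0
  set w : ℝ → Fin (n+k) → ℝ := fun s => (NormedSpace.exp (s • A)).mulVec w0 with hw
  have hwx : ∀ s, 0 ≤ s → ∀ i, w s (Fin.castAdd k i) = x s i := fun s hs i => hxlin s hs i
  have hwD : ∀ s l, HasDerivAt (fun u => w u l) (A.mulVec (w s) l) s := by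
    intro s l
    have hterm : ∀ r, HasDerivAt (fun u : ℝ => NormedSpace.exp (u • A) l r * w0 r)
        ((A * NormedSpace.exp (s • A)) l r * w0 r) s :=
      fun r => (hasDerivAt_exp_entry A s l r).mul_const (w0 r)
    have hsum := HasDerivAt.fun_sum (fun r (_ : r ∈ Finset.univ) => hterm r)
    have hfun : (fun u => w u l) = fun u => ∑ r, NormedSpace.exp (u • A) l r * w0 r := by
      funext u
      show (NormedSpace.exp (u • A)).mulVec w0 l = _
      rfl
    have hval : A.mulVec (w s) l = ∑ r, (A * NormedSpace.exp (s • A)) l r * w0 r := by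
      show A.mulVec ((NormedSpace.exp (s • A)).mulVec w0) l = _
      rw [Matrix.mulVec_mulVec]
      rfl
    rw [hfun, hval]
    exact hsum
  -- observables
  set Z : ℝ → (Fin n ⊕ (Fin (n+k) → Fin (D+1))) → ℝ :=
    fun s r => MvPolynomial.eval (w s) (RP r) with hZ
  have hZval : ∀ s r, Z s r = MvPolynomial.eval (w s) (RP r) := fun _ _ => rfl
  have hZD : ∀ s r, HasDerivAt (fun u => Z u r) (M.mulVec (Z s) r) s := by
    intro s r
    have hcurve := hasDerivAt_eval_curve w (A.mulVec (w s)) s (fun j => hwD s j) (RP r)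
    have hv1 : (∑ j, MvPolynomial.eval (w s) (MvPolynomial.pderiv j (RP r))
        * A.mulVec (w s) j) = MvPolynomial.eval (w s) (Dop (RP r)) := by
      rw [hDopP, map_sum]
      refine Finset.sum_congr rfl fun j _ => ?_
      rw [_root_.map_mul, mul_comm]
      congr 1
      rw [map_sum]
      simp [Matrix.mulVec, dotProduct]
    have hv2 : MvPolynomial.eval (w s) (Dop (RP r)) = M.mulVec (Z s) r := by
      rw [eval_expand (Dop (RP r)) (hdegDop _ (hdegR r)) (w s)]
      have hmv : M.mulVec (Z s) r = ∑ c, M r c * Z s c := rfl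
      rw [hmv, Fintype.sum_sum_type]
      have hzero : ∑ j : Fin n, M r (Sum.inl j) * Z s (Sum.inl j) = 0 := by
        refine Finset.sum_eq_zero fun j _ => ?_
        rw [hMinl, zero_mul]
      rw [hzero, zero_add]
      refine Finset.sum_congr rfl fun β _ => ?_
      rw [hMinr, hZval, hRPinr, hePval]
      by_cases hβ : (∑ j, (β j : ℕ)) ≤ D
      · simp only [if_pos hβ]
      · simp only [if_neg hβ, zero_mul]
    rw [hv1, hv2] at hcurve
    exact hcurve
  set Z' : ℝ → Fin (n + K) → ℝ := fun s j => Z s (E.symm j) with hZ'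
  have hZ'val : ∀ s j, Z' s j = Z s (E.symm j) := fun _ _ => rfl
  have hZ'D : ∀ s j, HasDerivAt (fun u => Z' u j) (A'.mulVec (Z' s) j) s := by
    intro s j
    have hval : A'.mulVec (Z' s) j = M.mulVec (Z s) (E.symm j) := by
      have h1 : A'.mulVec (Z' s) j = ∑ c, M (E.symm j) (E.symm c) * Z s (E.symm c) := rfl
      have h2 : M.mulVec (Z s) (E.symm j) = ∑ c, M (E.symm j) c * Z s c := rfl
      rw [h1, h2]
      exact Equiv.sum_comp E.symm (fun c => M (E.symm j) c * Z s c)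
    rw [hval]
    exact hZD s (E.symm j)
  have hflow := flow_eq_exp_mulVec A' Z' hZ'D
  -- identification of the components
  have hEleft : ∀ i : Fin n, E.symm (Fin.castAdd K i) = Sum.inl i := by
    intro i
    have hEi : E (Sum.inl i) = Fin.castAdd K i := by
      rw [hE]
      simp [finSumFinEquiv_apply_left]
      rfl
    rw [← hEi, Equiv.symm_apply_apply]
  have hEright : ∀ j : Fin K, E.symm (Fin.natAdd n j)
      = Sum.inr ((Fintype.equivFin (Fin (n+k) → Fin (D+1))).symm j) := by
    intro j
    have hEj : E (Sum.inr ((Fintype.equivFin (Fin (n+k) → Fin (D+1))).symm j))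
        = Fin.natAdd n j := by
      rw [hE]
      simp [finSumFinEquiv_apply_right]
    rw [← hEj, Equiv.symm_apply_apply]
  have hw0' : w 0 = w0 := by
    show (NormedSpace.exp ((0:ℝ) • A)).mulVec w0 = w0
    rw [zero_smul, NormedSpace.exp_zero, Matrix.one_mulVec]
  have hZinl : ∀ s, 0 ≤ s → ∀ i : Fin n, Z s (Sum.inl i) = y s i := by
    intro s hs i
    have h1 : Z s (Sum.inl i)
        = MvPolynomial.eval (w s) (rename (Fin.castAdd k) (Ψ i)) := rfl
    rw [h1, eval_rename]
    have hcomp : (w s ∘ Fin.castAdd k) = x s := by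
      funext l
      exact hwx s hs l
    rw [hcomp, ← hΨ (x s) i]
    exact congrFun (hinv' (y s)) i
  have hZ'0 : Z' 0 = Fin.append y₀ (p' y₀) := by
    funext j
    refine Fin.addCases (motive := fun j => Z' 0 j = Fin.append y₀ (p' y₀) j) ?_ ?_ j
    · intro i
      rw [Fin.append_left, hZ'val, hEleft i, hZinl 0 le_rfl i, hy0]
    · intro j'
      rw [Fin.append_right, hZ'val, hEright j', hZval, hRPinr, hw0']
  intro t ht i
  have hgoal := hflow t (Fin.castAdd K i)
  rw [hZ'0] at hgoal
  rw [hgoal, hZ'val, hEleft i]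
  exact hZinl t ht i

/-- If `f` is a super-linearizable polynomial vector field and `ψ` is a stably tame
polynomial automorphism with polynomial inverse `ψinv`, then
`h(y) = Dψ(ψ⁻¹(y)) · f(ψ⁻¹(y))` is super-linearizable. -/
theorem superlinearizable_of_stablyTame {n : ℕ}
    (f ψ ψinv h : (Fin n → ℝ) → (Fin n → ℝ))
    (hfpoly : IsPolyMap f) (hfsl : IsSuperLinearizable f)
    (hψpoly : IsPolyMap ψ) (hψinvpoly : IsPolyMap ψinv)
    (hψ : IsStablyTame ψ)
    (hinv : Function.LeftInverse ψinv ψ) (hinv' : Function.RightInverse ψinv ψ)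
    (hh : ∀ y, h y = fderiv ℝ ψ (ψinv y) (f (ψinv y))) :
    IsSuperLinearizable h :=
  superlinearizable_aux f ψ ψinv h hfpoly hfsl hψpoly hψinvpoly hinv hinv' hh
end

section
/- Let f : ℝⁿ → ℝⁿ be a super-linearizable polynomial vector field and let c ∈ ℝⁿ. Then the polynomial vector field h : ℝⁿ → ℝⁿ defined by h(z) = f(z + c) (the dynamics of z = x − c when ẋ = f(x)) is super-linearizable. -/
open Matrix MvPolynomial

open NormedSpace in
private lemma fromBlocksDiag_pow {p q : Type*} [Fintype p] [DecidableEq p] [Fintype q]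
    [DecidableEq q] (M : Matrix p p ℝ) (N : Matrix q q ℝ) (i : ℕ) :
    (fromBlocks M 0 0 N) ^ i = fromBlocks (M ^ i) 0 0 (N ^ i) := by
  induction i with
  | zero => simp [Matrix.fromBlocks_one]
  | succ i ih =>
      rw [pow_succ, pow_succ, pow_succ, ih, Matrix.fromBlocks_multiply]
      simp

open NormedSpace in
private lemma exp_fromBlocksDiag {p q : Type*} [Fintype p] [DecidableEq p] [Fintype q]
    [DecidableEq q] (M : Matrix p p ℝ) (N : Matrix q q ℝ) :
    exp (fromBlocks M 0 0 N) = fromBlocks (exp M) 0 0 (exp N) := by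
  letI : SeminormedRing (Matrix p p ℝ) := Matrix.linftyOpSemiNormedRing
  letI : NormedRing (Matrix p p ℝ) := Matrix.linftyOpNormedRing
  letI : NormedAlgebra ℝ (Matrix p p ℝ) := Matrix.linftyOpNormedAlgebra
  letI : SeminormedRing (Matrix q q ℝ) := Matrix.linftyOpSemiNormedRing
  letI : NormedRing (Matrix q q ℝ) := Matrix.linftyOpNormedRing
  letI : NormedAlgebra ℝ (Matrix q q ℝ) := Matrix.linftyOpNormedAlgebra
  have hM : HasSum (fun i : ℕ => ((i.factorial : ℝ))⁻¹ • M ^ i) (exp M) :=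
    exp_series_hasSum_exp' M
  have hN : HasSum (fun i : ℕ => ((i.factorial : ℝ))⁻¹ • N ^ i) (exp N) :=
    exp_series_hasSum_exp' N
  let φ : (Matrix p p ℝ × Matrix q q ℝ) →+ Matrix (p ⊕ q) (p ⊕ q) ℝ :=
    { toFun := fun x => fromBlocks x.1 0 0 x.2
      map_zero' := Matrix.fromBlocks_zero
      map_add' := fun x y => by
        simp [Matrix.fromBlocks_add] }
  have hφc : Continuous φ := by
    show Continuous fun x : Matrix p p ℝ × Matrix q q ℝ => fromBlocks x.1 0 0 x.2
    exact Continuous.matrix_fromBlocks continuous_fst continuous_const continuous_const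
      continuous_snd
  have h := ((hM.prodMk hN).map φ hφc)
  have h' : HasSum
      (fun i : ℕ => fromBlocks (((i.factorial : ℝ))⁻¹ • M ^ i) 0 0 (((i.factorial : ℝ))⁻¹ • N ^ i))
      (fromBlocks (exp M) 0 0 (exp N)) := h
  rw [exp_eq_tsum ℝ]
  have heq : ∀ i : ℕ, ((i.factorial : ℝ))⁻¹ • (fromBlocks M 0 0 N) ^ i
      = fromBlocks (((i.factorial : ℝ))⁻¹ • M ^ i) 0 0 (((i.factorial : ℝ))⁻¹ • N ^ i) := by
    intro i
    rw [fromBlocksDiag_pow, Matrix.fromBlocks_smul]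
    simp
  simp_rw [heq]
  exact h'.tsum_eq

open NormedSpace in
private lemma exp_reindex' {p q : Type*} [Fintype p] [DecidableEq p] [Fintype q] [DecidableEq q]
    (e : p ≃ q) (M : Matrix p p ℝ) :
    exp (Matrix.reindex e e M) = Matrix.reindex e e (exp M) := by
  letI : SeminormedRing (Matrix p p ℝ) := Matrix.linftyOpSemiNormedRing
  letI : NormedRing (Matrix p p ℝ) := Matrix.linftyOpNormedRing
  letI : NormedAlgebra ℝ (Matrix p p ℝ) := Matrix.linftyOpNormedAlgebra
  letI : SeminormedRing (Matrix q q ℝ) := Matrix.linftyOpSemiNormedRing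
  letI : NormedRing (Matrix q q ℝ) := Matrix.linftyOpNormedRing
  letI : NormedAlgebra ℝ (Matrix q q ℝ) := Matrix.linftyOpNormedAlgebra
  letI : NormedAlgebra ℚ (Matrix p p ℝ) := NormedAlgebra.restrictScalars ℚ ℝ (Matrix p p ℝ)
  have hc : Continuous (Matrix.reindexAlgEquiv ℝ ℝ e) := by
    show Continuous fun M : Matrix p p ℝ => Matrix.reindex e e M
    exact continuous_id.matrix_reindex e e
  exact (map_exp (Matrix.reindexAlgEquiv ℝ ℝ e) hc M).symm

/-- Super-linearizability is preserved under translations: if `f` is super-linearizable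
and `c ∈ ℝⁿ`, then `h(z) = f(z + c)` is super-linearizable. -/
theorem superlinearizable_translation {n : ℕ}
    (f : (Fin n → ℝ) → (Fin n → ℝ))
    (hfpoly : IsPolyMap f) (hfsl : IsSuperLinearizable f) (c : Fin n → ℝ) :
    IsSuperLinearizable (fun z => f (z + c)) := by
  classical
  obtain ⟨k, A, p, ⟨P, hP⟩, hsol⟩ := hfsl
  -- extended translation vector
  set cext : Fin (n + k) → ℝ := Fin.append c 0 with hcext
  -- the column matrix implementing the affine shift
  set Ccol : Matrix (Fin (n + k)) (Fin 1) ℝ := Matrix.of (fun i _ => -(cext i)) with hCcol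
  set T : Matrix (Fin (n + k) ⊕ Fin 1) (Fin (n + k) ⊕ Fin 1) ℝ := fromBlocks 1 Ccol 0 1 with hT
  set Tinv : Matrix (Fin (n + k) ⊕ Fin 1) (Fin (n + k) ⊕ Fin 1) ℝ :=
    fromBlocks 1 (-Ccol) 0 1 with hTinv
  have hTT : T * Tinv = 1 := by
    rw [hT, hTinv, Matrix.fromBlocks_multiply]
    simp [Matrix.fromBlocks_one]
  have hTT' : Tinv * T = 1 := by
    rw [hT, hTinv, Matrix.fromBlocks_multiply]
    simp [Matrix.fromBlocks_one]
  set U : (Matrix (Fin (n + k) ⊕ Fin 1) (Fin (n + k) ⊕ Fin 1) ℝ)ˣ := ⟨T, Tinv, hTT, hTT'⟩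
    with hU
  set B : Matrix (Fin (n + k) ⊕ Fin 1) (Fin (n + k) ⊕ Fin 1) ℝ :=
    fromBlocks A 0 0 (0 : Matrix (Fin 1) (Fin 1) ℝ) with hB
  set A'' : Matrix (Fin (n + k) ⊕ Fin 1) (Fin (n + k) ⊕ Fin 1) ℝ := T * B * Tinv with hA''
  let e : Fin (n + k) ⊕ Fin 1 ≃ Fin (n + (k + 1)) := finSumFinEquiv
  refine ⟨k + 1, Matrix.reindex e e A'',
    fun z => Fin.append (p (z + c)) (fun _ => 1), ?_, ?_⟩
  · -- polynomiality of the new map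
    refine ⟨fun j => Fin.addCases (motive := fun _ => MvPolynomial (Fin n) ℝ)
      (fun j₀ => MvPolynomial.eval₂ MvPolynomial.C (fun s => X s + MvPolynomial.C (c s)) (P j₀))
      (fun _ => 1) j, fun z j => ?_⟩
    refine Fin.addCases (fun j₀ => ?_) (fun j₁ => ?_) j
    · simp only [Fin.append_left, Fin.addCases_left, hP]
      rw [MvPolynomial.eval_eval₂]
      have h1 : ((MvPolynomial.eval z).comp (MvPolynomial.C : ℝ →+* MvPolynomial (Fin n) ℝ))
          = RingHom.id ℝ := by
        ext r; simp
      have h2 : (fun s => MvPolynomial.eval z (X s + MvPolynomial.C (c s)))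
          = fun s => (z + c) s := by
        funext s; simp
      rw [h1, h2]
      rfl
    · simp only [Fin.append_right, Fin.addCases_right]
      simp
  · intro z₀ z hz0 hderiv t ht i
    set x : ℝ → (Fin n → ℝ) := fun s => z s + c with hx
    have hx0 : x 0 = z₀ + c := by rw [hx]; simp [hz0]
    have hxderiv : ∀ s : ℝ, 0 ≤ s → HasDerivAt x (f (x s)) s := by
      intro s hs
      exact (hderiv s hs).add_const c
    have key := hsol (z₀ + c) x hx0 hxderiv t ht
    -- abbreviations
    set y₀ : Fin (n + k) → ℝ := Fin.append (z₀ + c) (p (z₀ + c)) with hy₀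
    set w₀ : Fin (n + (k + 1)) → ℝ :=
      Fin.append z₀ (Fin.append (p (z₀ + c)) (fun _ => 1)) with hw₀
    -- step 1: smul commutes with reindex
    have h1 : t • Matrix.reindex e e A'' = Matrix.reindex e e (t • A'') := by
      ext i' j'; rfl
    -- step 2: exp commutes with reindex
    have h2 : NormedSpace.exp (Matrix.reindex e e (t • A''))
        = Matrix.reindex e e (NormedSpace.exp (t • A'')) := exp_reindex' e (t • A'')
    -- step 3: conjugation
    have h3 : t • A'' = (U : Matrix _ _ ℝ) * (t • B) * ((U⁻¹ : _ˣ) : Matrix _ _ ℝ) := by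
      rw [hA'']
      show t • (T * B * Tinv) = T * (t • B) * Tinv
      rw [Matrix.mul_smul, Matrix.smul_mul]
    have h4 : NormedSpace.exp (t • A'')
        = T * NormedSpace.exp (t • B) * Tinv := by
      rw [h3, Matrix.exp_units_conj]
      rfl
    -- step 4: exponential of the block diagonal
    have h5 : t • B = fromBlocks (t • A) 0 0 (0 : Matrix (Fin 1) (Fin 1) ℝ) := by
      rw [hB, Matrix.fromBlocks_smul]
      simp
    have h6 : NormedSpace.exp (t • B)
        = fromBlocks (NormedSpace.exp (t • A)) 0 0 (1 : Matrix (Fin 1) (Fin 1) ℝ) := by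
      rw [h5, exp_fromBlocksDiag, NormedSpace.exp_zero]
    -- the initial vector, transported along e
    have hw : w₀ ∘ e = Sum.elim (y₀ - cext) (fun _ => 1) := by
      funext s
      cases s with
      | inl a =>
        show w₀ (e (Sum.inl a)) = y₀ a - cext a
        rw [show e (Sum.inl a) = Fin.castAdd 1 a from finSumFinEquiv_apply_left a]
        refine Fin.addCases (fun i₀ => ?_) (fun j₀ => ?_) a
        · have : (Fin.castAdd 1 (Fin.castAdd k i₀) : Fin (n + (k + 1)))
              = Fin.castAdd (k + 1) i₀ := rfl
          rw [this, hw₀, Fin.append_left, hy₀, Fin.append_left, hcext, Fin.append_left]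
          simp
        · have : (Fin.castAdd 1 (Fin.natAdd n j₀) : Fin (n + (k + 1)))
              = Fin.natAdd n (Fin.castAdd 1 j₀) := rfl
          rw [this, hw₀, Fin.append_right, Fin.append_left, hy₀, Fin.append_right,
            hcext, Fin.append_right]
          simp
      | inr b =>
        show w₀ (e (Sum.inr b)) = 1
        rw [show e (Sum.inr b) = Fin.natAdd (n + k) b from finSumFinEquiv_apply_right b]
        have : (Fin.natAdd (n + k) b : Fin (n + (k + 1)))
            = Fin.natAdd n (Fin.natAdd k b) := by
          apply Fin.ext
          simp [Nat.add_assoc]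
        rw [this, hw₀, Fin.append_right, Fin.append_right]
    -- index transported along e
    have hidx : e.symm (Fin.castAdd (k + 1) i) = Sum.inl (Fin.castAdd k i) := by
      have : (Fin.castAdd (k + 1) i : Fin (n + (k + 1)))
          = Fin.castAdd 1 (Fin.castAdd k i) := rfl
      rw [this]
      exact finSumFinEquiv_symm_apply_castAdd (Fin.castAdd k i)
    -- the vector computation on the sum type
    have hvec : (T * NormedSpace.exp (t • B) * Tinv).mulVec (w₀ ∘ e)
        = Sum.elim ((NormedSpace.exp (t • A)).mulVec y₀ - cext) (fun _ => 1) := by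
      rw [hw]
      rw [← Matrix.mulVec_mulVec, ← Matrix.mulVec_mulVec]
      have s1 : Tinv.mulVec (Sum.elim (y₀ - cext) (fun _ => 1))
          = Sum.elim y₀ (fun _ => 1) := by
        rw [hTinv, Matrix.fromBlocks_mulVec]
        funext s
        cases s with
        | inl a =>
          simp [Matrix.mulVec, dotProduct, hCcol, Fin.sum_univ_one]
        | inr b =>
          simp [Matrix.mulVec, dotProduct, Fin.sum_univ_one]
      rw [s1, h6, Matrix.fromBlocks_mulVec]
      simp only [Matrix.fromBlocks_mulVec, Sum.elim_comp_inl, Sum.elim_comp_inr,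
        Matrix.zero_mulVec, Matrix.one_mulVec, add_zero, zero_add]
      funext s
      cases s with
      | inl a =>
        simp [Matrix.mulVec, dotProduct, hCcol, Fin.sum_univ_one, sub_eq_add_neg]
      | inr b =>
        simp
    -- put everything together
    show (NormedSpace.exp (t • Matrix.reindex e e A'')).mulVec w₀ (Fin.castAdd (k + 1) i)
      = z t i
    rw [h1, h2, Matrix.reindex_apply, Matrix.submatrix_mulVec_equiv]
    have : w₀ ∘ ⇑e.symm.symm = w₀ ∘ e := rfl
    rw [this]
    show (NormedSpace.exp (t • A'')).mulVec (w₀ ∘ e) (e.symm (Fin.castAdd (k + 1) i)) = z t i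
    rw [h4, hvec, hidx]
    have : (Sum.elim ((NormedSpace.exp (t • A)).mulVec y₀ - cext) (fun _ : Fin 1 => (1:ℝ)))
        (Sum.inl (Fin.castAdd k i))
        = (NormedSpace.exp (t • A)).mulVec y₀ (Fin.castAdd k i) - cext (Fin.castAdd k i) := rfl
    rw [this, hy₀, key i, hcext, Fin.append_left, hx]
    simp
end
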